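/- Let (R, m) be a regular local ring with regular system of parameters u, and let ν be a valuation of rank 1 centered on R. Call f ∈ R non-degenerate with respect to ν and u if ν_{0,u}(f) = ν(f), where ν_{0,u} is the monomial valuation associated to u and the values ν(u_i). If (R, u) → (R′, u′) is a ring map such that each u_j equals a monomial in u′ times a unit of R′, ν extends to a valuation centered on R′, and ν_{0,u′} denotes the monomial valuation of R′ for the values ν(u′_i), then ν_{0,u}(f) ≤ ν_{0,u′}(f) ≤ ν(f) for all nonzero f ∈ R; in particular, if f is non-degenerate with respect to u then f is non-degenerate with respect to u′. -/

import Mathlib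

/-- Non-degeneracy is preserved by framed blowups.  Let `φ : R → R'`
be a local homomorphism of regular local rings with regular systems of parameters `u`
and `u'`, such that each `φ(u_j)` is a monomial in `u'` times a unit of `R'`.  Let
`ν'` be a rank-1 valuation centered on `R'` (restricting to ν on `R` via `φ`), and let
`ν_{0,u}`, `ν_{0,u'}` be the monomial valuations for the weights `β_i = ν(u_i)`,
`β'_i = ν'(u'_i)`.  Then for all nonzero `f ∈ R`:
`ν_{0,u}(f) ≤ ν_{0,u'}(φ f) ≤ ν'(φ f)`; in particular, if `f` is non-degenerate for `u`
(`ν_{0,u}(f) = ν(f)`) then `φ f` is non-degenerate for `u'`. -/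
theorem nondegenerate_stable_under_framed_blowup
    {R R' : Type*} [CommRing R] [CommRing R'] [IsLocalRing R] [IsLocalRing R']
    {Γ : Type*} [AddCommGroup Γ] [LinearOrder Γ] [IsOrderedAddMonoid Γ] [Archimedean Γ]
    (φ : R →+* R')
    (hloc : ∀ a : R, a ∈ IsLocalRing.maximalIdeal R → φ a ∈ IsLocalRing.maximalIdeal R')
    (v' : R' → WithTop Γ)
    (hv1 : v' 1 = 0)
    (hmul : ∀ a b, v' (a * b) = v' a + v' b)
    (hadd : ∀ a b, min (v' a) (v' b) ≤ v' (a + b))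
    (hnonneg : ∀ a, 0 ≤ v' a)
    {n n' : ℕ} (u : Fin n → R) (u' : Fin n' → R')
    (hu : IsLocalRing.maximalIdeal R = Ideal.span (Set.range u))
    (hu' : IsLocalRing.maximalIdeal R' = Ideal.span (Set.range u'))
    (β : Fin n → Γ) (hβ : ∀ i, v' (φ (u i)) = (β i : WithTop Γ) ∧ 0 < β i)
    (β' : Fin n' → Γ) (hβ' : ∀ i, v' (u' i) = (β' i : WithTop Γ) ∧ 0 < β' i)
    (δ : Fin n → Fin n' → ℕ) (z : Fin n → R'ˣ)
    (hmono : ∀ j, φ (u j) = (z j : R') * ∏ i, u' i ^ δ j i)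
    (I : Γ → Ideal R)
    (hI : ∀ γ, I γ = Ideal.span
      {m | ∃ a : Fin n → ℕ, m = ∏ i, u i ^ a i ∧ γ ≤ ∑ i, a i • β i})
    (I' : Γ → Ideal R')
    (hI' : ∀ γ, I' γ = Ideal.span
      {m | ∃ a : Fin n' → ℕ, m = ∏ i, u' i ^ a i ∧ γ ≤ ∑ i, a i • β' i})
    (ν₀ : R → Γ)
    (hν₀ : ∀ f : R, f ≠ 0 → f ∈ I (ν₀ f) ∧ ∀ γ : Γ, f ∈ I γ → γ ≤ ν₀ f)
    (ν₀' : R' → Γ)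
    (hν₀' : ∀ g : R', g ≠ 0 → g ∈ I' (ν₀' g) ∧ ∀ γ : Γ, g ∈ I' γ → γ ≤ ν₀' g)
    (f : R) (hf : f ≠ 0) (hφf : φ f ≠ 0) :
    ν₀ f ≤ ν₀' (φ f) ∧ (ν₀' (φ f) : WithTop Γ) ≤ v' (φ f) := by
  -- value of a unit is 0
  have hunit : ∀ w : R'ˣ, v' (w : R') = 0 := by
    intro w
    have h : v' (w : R') + v' (↑w⁻¹ : R') = 0 := by
      rw [← hmul, Units.mul_inv, hv1]
    have h1 := hnonneg (w : R')
    have h2 := hnonneg (↑w⁻¹ : R')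
    refine le_antisymm ?_ h1
    calc v' (w : R') = v' (w : R') + 0 := (add_zero _).symm
    _ ≤ v' (w : R') + v' (↑w⁻¹ : R') := by exact add_le_add le_rfl h2
    _ = 0 := h
  have hpow : ∀ (x : R') (k : ℕ), v' (x ^ k) = k • v' x := by
    intro x k
    induction k with
    | zero => simpa using hv1
    | succ k ih => rw [pow_succ, hmul, ih, succ_nsmul]
  have hprod : ∀ {m : ℕ} (g : Fin m → R'), v' (∏ i, g i) = ∑ i, v' (g i) := by
    intro m g
    have : ∀ s : Finset (Fin m), v' (∏ i ∈ s, g i) = ∑ i ∈ s, v' (g i) := by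
      intro s
      induction s using Finset.cons_induction with
      | empty => simpa using hv1
      | cons a s ha ih => rw [Finset.prod_cons, Finset.sum_cons, hmul, ih]
    exact this _
  -- value of monomials in u'
  have hmonval : ∀ a : Fin n' → ℕ,
      v' (∏ i, u' i ^ a i) = ((∑ i, a i • β' i : Γ) : WithTop Γ) := by
    intro a
    rw [hprod]
    have : ∀ i, v' (u' i ^ a i) = ((a i • β' i : Γ) : WithTop Γ) := by
      intro i
      rw [hpow, (hβ' i).1]
      push_cast
      rfl
    rw [Finset.sum_congr rfl fun i _ => this i]
    push_cast
    rfl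
  -- β j in terms of β'
  have hβeq : ∀ j, β j = ∑ i, δ j i • β' i := by
    intro j
    have h1 : v' (φ (u j)) = ((∑ i, δ j i • β' i : Γ) : WithTop Γ) := by
      rw [hmono j, hmul, hunit, zero_add, hmonval]
    have := (hβ j).1.symm.trans h1
    exact_mod_cast this
  -- elements of I' γ have value ≥ γ
  have hID : ∀ (γ : Γ) (x : R'), x ∈ I' γ → x = 0 ∨ (γ : WithTop Γ) ≤ v' x := by
    intro γ x hx
    rw [hI', Ideal.span] at hx
    induction hx using Submodule.span_induction with
    | mem y hy =>
      obtain ⟨a, rfl, hle⟩ := hy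
      right
      rw [hmonval]
      exact_mod_cast hle
    | zero => left; rfl
    | add y w _ _ hy hw =>
      rcases hy with rfl | hy
      · simpa using hw
      rcases hw with rfl | hw
      · simpa using Or.inr hy
      right
      exact le_trans (le_min hy hw) (hadd y w)
    | smul r y _ hy =>
      rcases hy with rfl | hy
      · left; simp
      right
      have : v' (r * y) = v' r + v' y := hmul r y
      rw [smul_eq_mul, this]
      calc (γ : WithTop Γ) = 0 + γ := (zero_add _).symm
      _ ≤ v' r + v' y := add_le_add (hnonneg r) hy
  -- φ maps I γ into I' γ
  have hmap : ∀ (γ : Γ) (g : R), g ∈ I γ → φ g ∈ I' γ := by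
    intro γ g hg
    rw [hI] at hg
    have hle : Ideal.span {m | ∃ a : Fin n → ℕ, m = ∏ i, u i ^ a i ∧ γ ≤ ∑ i, a i • β i}
        ≤ Ideal.comap φ (I' γ) := by
      rw [Ideal.span_le]
      rintro m ⟨a, rfl, hle⟩
      have hφm : φ (∏ i, u i ^ a i)
          = (∏ i, (z i : R') ^ a i) * ∏ j, u' j ^ (∑ i, a i * δ i j) := by
        rw [map_prod]
        calc ∏ i, φ (u i ^ a i)
            = ∏ i, ((z i : R') ^ a i * ∏ j, u' j ^ (δ i j * a i)) := by
              refine Finset.prod_congr rfl fun i _ => ?_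
              rw [map_pow, hmono i, mul_pow, ← Finset.prod_pow]
              congr 1
              refine Finset.prod_congr rfl fun j _ => ?_
              rw [← pow_mul]
          _ = (∏ i, (z i : R') ^ a i) * ∏ i, ∏ j, u' j ^ (δ i j * a i) := by
              rw [Finset.prod_mul_distrib]
          _ = (∏ i, (z i : R') ^ a i) * ∏ j, u' j ^ (∑ i, a i * δ i j) := by
              congr 1
              rw [Finset.prod_comm]
              refine Finset.prod_congr rfl fun j _ => ?_
              rw [Finset.prod_pow_eq_pow_sum]
              congr 1
              exact Finset.sum_congr rfl fun i _ => Nat.mul_comm _ _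
      have hw : γ ≤ ∑ j, (∑ i, a i * δ i j) • β' j := by
        refine le_trans hle (le_of_eq ?_)
        rw [Finset.sum_congr rfl fun i (_ : i ∈ Finset.univ) => by
          rw [hβeq i, Finset.smul_sum]]
        rw [Finset.sum_comm]
        refine Finset.sum_congr rfl fun j _ => ?_
        simp [Finset.sum_smul, mul_smul]
      simp only [SetLike.mem_coe, Ideal.mem_comap, hφm]
      refine Ideal.mul_mem_left _ _ ?_
      rw [hI']
      exact Ideal.subset_span ⟨fun j => ∑ i, a i * δ i j, rfl, hw⟩
    exact hle hg
  obtain ⟨hfI, _⟩ := hν₀ f hf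
  obtain ⟨hφfI, hφfmax⟩ := hν₀' (φ f) hφf
  constructor
  · exact hφfmax _ (hmap _ f hfI)
  · rcases hID _ _ hφfI with h0 | h
    · exact absurd h0 hφf
    · exact h
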